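/- Let C ⊆ ℝ^n be a compact convex set, f : ℝ^n → ℝ convex and differentiable on an open set containing C, and suppose (C,f) satisfies the strong (M,0)-growth property for some M > 0. Let ℓ ∈ ℕ with ℓ ≥ 2, η_t = ℓ/(t+ℓ), m > 0, r ∈ (0,1), and suppose there is a threshold S ≥ max{1, ⌈2^{1/r}·ℓM/m^{1/r} − ℓ⌉} such that for every t ≥ S, the Frank–Wolfe iterates satisfy either subopt_t < (η_t·M/m)^{1/(1−r)} or m·subopt_t^{1−r} ≤ gap_t. Then for all t ≥ S: subopt_t ≤ max{ subopt_S · (η_{t−1}/η_{S−1})^ℓ, η_{t−1}^{min{ℓ, 1/(1−r), 2}} · ( (M/m)^{1/(1−r)} + M/2 ) }. -/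

import Mathlib

open Set Finset Real Pointwise

noncomputable section

abbrev Eucl (n : ℕ) := EuclideanSpace ℝ (Fin n)

variable {n : ℕ}

/-- A Frank–Wolfe vertex at `x`: a minimizer over `C` of the linear function `y ↦ ⟪∇f(x), y⟫`. -/
def IsFWVertex (C : Set (Eucl n)) (f : Eucl n → ℝ) (x v : Eucl n) : Prop :=
  v ∈ C ∧ ∀ y ∈ C, (inner ℝ (gradient f x) v : ℝ) ≤ (inner ℝ (gradient f x) y : ℝ)

/-- The Wolfe gap `gap(x) = max_{y ∈ C} ⟪∇f(x), x - y⟫`. -/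
def gapF (C : Set (Eucl n)) (f : Eucl n → ℝ) (x : Eucl n) : ℝ :=
  sSup ((fun y => (inner ℝ (gradient f x) (x - y) : ℝ)) '' C)

/-- The primal suboptimality gap `subopt(x) = f(x) - min_{y ∈ C} f(y)`. -/
def suboptF (C : Set (Eucl n)) (f : Eucl n → ℝ) (x : Eucl n) : ℝ :=
  f x - sInf (f '' C)

/-- Bregman divergence `D_f(y, x) = f(y) - f(x) - ⟪∇f(x), y - x⟫`. -/
def bregmanD (f : Eucl n → ℝ) (y x : Eucl n) : ℝ :=
  f y - f x - (inner ℝ (gradient f x) (y - x) : ℝ)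

/-- Strong `(M, r)`-growth property. -/
def StrongGrowth (C : Set (Eucl n)) (f : Eucl n → ℝ) (M r : ℝ) : Prop :=
  ∀ x ∈ C, ∀ v, IsFWVertex C f x v → ∀ η ∈ Icc (0:ℝ) 1,
    bregmanD f (x + η • (v - x)) x ≤ M * η ^ 2 / 2 * gapF C f x ^ r

/-- Weak `(M, r)`-growth property. -/
def WeakGrowth (C : Set (Eucl n)) (f : Eucl n → ℝ) (M r : ℝ) : Prop :=
  ∀ x ∈ C, ∀ v, IsFWVertex C f x v → ∀ η ∈ Icc (0:ℝ) 1,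
    bregmanD f (x + η • (v - x)) x * suboptF C f x ^ (1 - r) ≤ M * η ^ 2 / 2 * gapF C f x

/-- Gaps `(m, r)`-growth property. -/
def GapsGrowth (C : Set (Eucl n)) (f : Eucl n → ℝ) (m r : ℝ) : Prop :=
  ∀ x ∈ C, m * suboptF C f x ^ (1 - r) ≤ gapF C f x

/-- `primaldual_t = min_{0 ≤ k ≤ t} (f(x_t) - f(x_k) + gap_k)`. -/
def primaldualSeq (C : Set (Eucl n)) (f : Eucl n → ℝ) (x : ℕ → Eucl n) (t : ℕ) : ℝ :=
  (Finset.range (t + 1)).inf' (Finset.nonempty_range_iff.mpr (Nat.succ_ne_zero t))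
    (fun k => f (x t) - f (x k) + gapF C f (x k))

/-! ### Auxiliary lemmas -/

lemma grad_ineq {C : Set (Eucl n)} {f : Eucl n → ℝ} (hfconv : ConvexOn ℝ C f)
    {U : Set (Eucl n)} (hUopen : IsOpen U) (hCU : C ⊆ U) (hfdiff : DifferentiableOn ℝ f U)
    {x y : Eucl n} (hx : x ∈ C) (hy : y ∈ C) :
    (inner ℝ (gradient f x) (y - x) : ℝ) ≤ f y - f x := by
  have hdx : DifferentiableAt ℝ f x :=
    (hfdiff x (hCU hx)).differentiableAt (hUopen.mem_nhds (hCU hx))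
  have hg : HasGradientAt f (gradient f x) x := hdx.hasGradientAt
  have hline : HasDerivAt (fun s : ℝ => x + s • (y - x)) (y - x) 0 := by
    simpa using ((hasDerivAt_id (0:ℝ)).smul_const (y - x)).const_add x
  have hcomp : HasDerivAt (fun s : ℝ => f (x + s • (y - x)))
      ((inner ℝ (gradient f x) (y - x) : ℝ)) 0 := by
    have hg2 : HasFDerivAt f ((InnerProductSpace.toDual ℝ (Eucl n)) (gradient f x))
        (x + (0:ℝ) • (y - x)) := by simpa using hg.hasFDerivAt
    have := hg2.comp_hasDerivAt 0 hline
    simpa [Function.comp_def] using this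
  have hslope : Filter.Tendsto (slope (fun s : ℝ => f (x + s • (y - x))) 0)
      (nhdsWithin 0 (Ioi 0)) (nhds ((inner ℝ (gradient f x) (y - x) : ℝ))) :=
    (hasDerivAt_iff_tendsto_slope.1 hcomp).mono_left
      (nhdsWithin_mono _ (fun s hs => ne_of_gt hs))
  refine le_of_tendsto hslope ?_
  filter_upwards [Ioc_mem_nhdsGT (zero_lt_one)] with s hs
  have h01 : (0:ℝ) < s := hs.1
  have hs1 : s ≤ 1 := hs.2
  have hcvx := hfconv.2 hx hy (by linarith : (0:ℝ) ≤ 1 - s) (le_of_lt h01) (by ring)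
  have hpt : x + s • (y - x) = (1 - s) • x + s • y := by
    simp [smul_sub, sub_smul]; abel
  rw [slope_def_field]
  have : f (x + s • (y - x)) ≤ (1 - s) * f x + s * f y := by rw [hpt]; exact hcvx
  have : (f (x + s • (y - x)) - f x) / s ≤ f y - f x := by
    rw [div_le_iff₀ h01]; nlinarith
  simpa [div_eq_inv_mul] using this

lemma gap_eq {C : Set (Eucl n)} {f : Eucl n → ℝ} {x v : Eucl n} (hv : IsFWVertex C f x v) :
    gapF C f x = (inner ℝ (gradient f x) (x - v) : ℝ) := by
  apply IsGreatest.csSup_eq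
  constructor
  · exact ⟨v, hv.1, rfl⟩
  · rintro z ⟨y, hy, rfl⟩
    simp only [inner_sub_right]
    linarith [hv.2 y hy]

lemma subopt_nonneg {C : Set (Eucl n)} {f : Eucl n → ℝ} (hCcomp : IsCompact C)
    (hfc : ContinuousOn f C) {x : Eucl n} (hx : x ∈ C) : 0 ≤ suboptF C f x := by
  have hbdd : BddBelow (f '' C) := (hCcomp.image_of_continuousOn hfc).bddBelow
  have : sInf (f '' C) ≤ f x := csInf_le hbdd ⟨x, hx, rfl⟩
  simp only [suboptF]; linarith

lemma subopt_le_gap {C : Set (Eucl n)} {f : Eucl n → ℝ} (hCne : C.Nonempty)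
    (hfconv : ConvexOn ℝ C f)
    {U : Set (Eucl n)} (hUopen : IsOpen U) (hCU : C ⊆ U) (hfdiff : DifferentiableOn ℝ f U)
    {x v : Eucl n} (hx : x ∈ C) (hv : IsFWVertex C f x v) :
    suboptF C f x ≤ gapF C f x := by
  rw [gap_eq hv, suboptF, sub_le_iff_le_add, ← sub_le_iff_le_add']
  apply le_csInf (hCne.image f)
  rintro z ⟨y, hy, rfl⟩
  have h1 := grad_ineq hfconv hUopen hCU hfdiff hx hy
  have h2 : (inner ℝ (gradient f x) (x - y) : ℝ) ≤ (inner ℝ (gradient f x) (x - v) : ℝ) := by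
    simp only [inner_sub_right]; linarith [hv.2 y hy]
  simp only [inner_sub_right] at h1 h2 ⊢
  linarith

lemma descent_lemma {C : Set (Eucl n)} {f : Eucl n → ℝ} {M : ℝ}
    (hstrong : StrongGrowth C f M 0)
    {x v : Eucl n} (hx : x ∈ C) (hv : IsFWVertex C f x v) {η : ℝ} (hη : η ∈ Icc (0:ℝ) 1) :
    suboptF C f (x + η • (v - x)) ≤ suboptF C f x - η * gapF C f x + M * η ^ 2 / 2 := by
  have hbr := hstrong x hx v hv η hη
  rw [Real.rpow_zero, mul_one] at hbr
  have hinner : (inner ℝ (gradient f x) (η • (v - x)) : ℝ) = - (η * gapF C f x) := by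
    rw [gap_eq hv, real_inner_smul_right]
    simp only [inner_sub_right]; ring
  simp only [bregmanD, add_sub_cancel_left, hinner] at hbr
  simp only [suboptF]
  linarith

set_option maxHeartbeats 1600000 in
/-- **Theorem (relaxed gaps growth, suboptimality rate).** -/
theorem fw_relaxed_gaps_growth_rate
    (n : ℕ) (C : Set (Eucl n)) (f : Eucl n → ℝ)
    (hCcomp : IsCompact C) (hCconv : Convex ℝ C) (hCne : C.Nonempty)
    (hfconv : ConvexOn ℝ C f)
    (U : Set (Eucl n)) (hUopen : IsOpen U) (hCU : C ⊆ U)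
    (hfdiff : DifferentiableOn ℝ f U)
    (M m r : ℝ) (hM : 0 < M) (hm : 0 < m) (hr : r ∈ Ioo (0 : ℝ) 1)
    (hstrong : StrongGrowth C f M 0)
    (ℓ : ℕ) (hℓ : 2 ≤ ℓ)
    (η : ℕ → ℝ) (hη : ∀ t : ℕ, η t = (ℓ : ℝ) / ((t : ℝ) + ℓ))
    (x v : ℕ → Eucl n)
    (hx0 : x 0 ∈ C)
    (hv : ∀ t : ℕ, IsFWVertex C f (x t) (v t))
    (hstep : ∀ t : ℕ, x (t + 1) = x t + η t • (v t - x t))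
    (S : ℕ)
    (hS : max 1 (⌈(2 : ℝ) ^ (1 / r) * (ℓ : ℝ) * M / m ^ (1 / r) - (ℓ : ℝ)⌉.toNat) ≤ S)
    (hrelax : ∀ t : ℕ, S ≤ t →
      suboptF C f (x t) < (η t * M / m) ^ (1 / (1 - r)) ∨
        m * suboptF C f (x t) ^ (1 - r) ≤ gapF C f (x t))
    (t : ℕ) (ht : S ≤ t) :
    suboptF C f (x t) ≤
      max (suboptF C f (x S) * (η (t - 1) / η (S - 1)) ^ ℓ)
        (η (t - 1) ^ min (min (ℓ : ℝ) (1 / (1 - r))) 2 *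
          ((M / m) ^ (1 / (1 - r)) + M / 2)) := by
  classical
  have h1r : (0:ℝ) < 1 - r := by linarith [hr.2]
  have hrpos : (0:ℝ) < r := hr.1
  have hL2 : (2:ℝ) ≤ (ℓ:ℝ) := by exact_mod_cast hℓ
  have hLpos : (0:ℝ) < (ℓ:ℝ) := by linarith
  have hfc : ContinuousOn f C := (hfdiff.continuousOn).mono hCU
  have hden : ∀ s : ℕ, (0:ℝ) < (s:ℝ) + ℓ := by
    intro s; have : (0:ℝ) ≤ (s:ℝ) := Nat.cast_nonneg s; linarith
  have hηpos : ∀ s : ℕ, 0 < η s := by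
    intro s; rw [hη s]; exact div_pos hLpos (hden s)
  have hηle1 : ∀ s : ℕ, η s ≤ 1 := by
    intro s; rw [hη s, div_le_one (hden s)]
    have : (0:ℝ) ≤ (s:ℝ) := Nat.cast_nonneg s; linarith
  have hηIcc : ∀ s : ℕ, η s ∈ Icc (0:ℝ) 1 := fun s => ⟨(hηpos s).le, hηle1 s⟩
  have hmem : ∀ s : ℕ, x s ∈ C := by
    intro s
    induction s with
    | zero => exact hx0
    | succ s ih =>
      rw [hstep s]
      have hpt : x s + η s • (v s - x s) = (1 - η s) • x s + η s • v s := by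
        simp [smul_sub, sub_smul]; abel
      rw [hpt]
      exact hCconv ih (hv s).1 (by linarith [hηle1 s]) (hηpos s).le (by ring)
  set h : ℕ → ℝ := fun s => suboptF C f (x s) with hh
  have hnn : ∀ s : ℕ, 0 ≤ h s := fun s => subopt_nonneg hCcomp hfc (hmem s)
  have hgap : ∀ s : ℕ, h s ≤ gapF C f (x s) := fun s =>
    subopt_le_gap hCne hfconv hUopen hCU hfdiff (hmem s) (hv s)
  have hdes : ∀ s : ℕ, h (s+1) ≤ h s - η s * gapF C f (x s) + M * η s ^ 2 / 2 := by
    intro s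
    have := descent_lemma hstrong (hmem s) (hv s) (hηIcc s)
    show suboptF C f (x (s+1)) ≤ _
    rw [hstep s]; exact this
  have hdes' : ∀ s : ℕ, h (s+1) ≤ (1 - η s) * h s + M * η s ^ 2 / 2 := by
    intro s
    have h1 := hdes s
    have h2 : η s * h s ≤ η s * gapF C f (x s) :=
      mul_le_mul_of_nonneg_left (hgap s) (hηpos s).le
    nlinarith
  -- baseline rate : h s ≤ M * η s for s ≥ 1
  have hbase : ∀ s : ℕ, 1 ≤ s → h s ≤ M * η s := by
    intro s hs
    induction s, hs using Nat.le_induction with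
    | base =>
      have h0 : η 0 = 1 := by rw [hη 0]; simp [ne_of_gt hLpos]
      have h1 := hdes' 0
      rw [h0] at h1
      have : h 1 ≤ M / 2 := by nlinarith [hnn 0]
      have hη1 : (1:ℝ)/2 ≤ η 1 := by
        rw [hη 1, le_div_iff₀ (hden 1), Nat.cast_one]; linarith
      nlinarith
    | succ s hs ih =>
      have h1 := hdes' s
      have h2 : (1 - η s) * h s ≤ (1 - η s) * (M * η s) :=
        mul_le_mul_of_nonneg_left ih (by linarith [hηle1 s])
      have h3 : (1 - η s) * (M * η s) + M * η s ^ 2 / 2 ≤ M * η (s+1) := by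
        rw [hη s, hη (s+1)]
        push_cast
        set a : ℝ := (s:ℝ) with ha
        have hann : (0:ℝ) ≤ a := Nat.cast_nonneg s
        have hA : (0:ℝ) < a + ℓ := hden s
        have hA1 : (0:ℝ) < a + 1 + (ℓ:ℝ) := by linarith
        have h2' : (1 - (ℓ:ℝ)/(a+ℓ)) * ((ℓ:ℝ)/(a+ℓ)) + ((ℓ:ℝ)/(a+ℓ))^2/2
            ≤ (ℓ:ℝ)/(a+1+ℓ) := by
          rw [show (1 - (ℓ:ℝ)/(a+ℓ)) * ((ℓ:ℝ)/(a+ℓ)) + ((ℓ:ℝ)/(a+ℓ))^2/2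
              = ((ℓ:ℝ)*(2*(a+ℓ) - ℓ))/(2*(a+ℓ)^2) by field_simp; ring]
          rw [div_le_div_iff₀ (by positivity) hA1]
          have hx1 : 2*(a+(ℓ:ℝ)+1) ≤ (ℓ:ℝ)*(a+ℓ+1) := by nlinarith
          nlinarith [mul_le_mul_of_nonneg_left hx1 (by linarith : (0:ℝ) ≤ (ℓ:ℝ))]
        nlinarith [sq_nonneg ((ℓ:ℝ)/(a+ℓ))]
      linarith
  -- threshold : for s ≥ S, M * η s ≤ (m/2)^(1/r)
  have hthr : ∀ s : ℕ, S ≤ s → M * η s ≤ (m/2) ^ (1/r) := by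
    intro s hs
    have hX : (2:ℝ) ^ (1/r) * (ℓ:ℝ) * M / m ^ (1/r) - (ℓ:ℝ) ≤ (S:ℝ) := by
      have h1 : ((⌈(2:ℝ) ^ (1/r) * (ℓ:ℝ) * M / m ^ (1/r) - (ℓ:ℝ)⌉.toNat : ℕ) : ℝ) ≤ (S:ℝ) := by
        exact_mod_cast le_trans (le_max_right _ _) hS
      calc (2:ℝ) ^ (1/r) * (ℓ:ℝ) * M / m ^ (1/r) - (ℓ:ℝ)
          ≤ (⌈(2:ℝ) ^ (1/r) * (ℓ:ℝ) * M / m ^ (1/r) - (ℓ:ℝ)⌉ : ℝ) := Int.le_ceil _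
        _ ≤ ((⌈(2:ℝ) ^ (1/r) * (ℓ:ℝ) * M / m ^ (1/r) - (ℓ:ℝ)⌉.toNat : ℕ) : ℝ) := by
            exact_mod_cast Int.self_le_toNat _
        _ ≤ (S:ℝ) := h1
    have hm2 : (0:ℝ) < m ^ (1/r) := Real.rpow_pos_of_pos hm _
    have h2r : (0:ℝ) < (2:ℝ) ^ (1/r) := Real.rpow_pos_of_pos two_pos _
    have hXpos : (0:ℝ) < (2:ℝ) ^ (1/r) * (ℓ:ℝ) * M / m ^ (1/r) := by positivity
    have hsS : (S:ℝ) ≤ (s:ℝ) := by exact_mod_cast hs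
    have hbig : (2:ℝ) ^ (1/r) * (ℓ:ℝ) * M / m ^ (1/r) ≤ (s:ℝ) + ℓ := by linarith
    have hηb : η s ≤ (ℓ:ℝ) / ((2:ℝ) ^ (1/r) * (ℓ:ℝ) * M / m ^ (1/r)) := by
      rw [hη s]
      exact div_le_div_of_nonneg_left hLpos.le hXpos hbig
    have heq : (ℓ:ℝ) / ((2:ℝ) ^ (1/r) * (ℓ:ℝ) * M / m ^ (1/r)) = (m/2) ^ (1/r) / M := by
      rw [Real.div_rpow hm.le two_pos.le]
      field_simp
    rw [heq] at hηb
    calc M * η s ≤ M * ((m/2) ^ (1/r) / M) := mul_le_mul_of_nonneg_left hηb hM.le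
      _ = (m/2) ^ (1/r) := by field_simp
  -- constants
  set α : ℝ := min (min (ℓ:ℝ) (1/(1-r))) 2 with hα
  set K : ℝ := (M/m) ^ (1/(1-r)) + M/2 with hK
  have hα2 : α ≤ 2 := min_le_right _ _
  have hα1r : α ≤ 1/(1-r) := le_trans (min_le_left _ _) (min_le_right _ _)
  have hαℓ : α ≤ (ℓ:ℝ) := le_trans (min_le_left _ _) (min_le_left _ _)
  have hKnn : 0 ≤ K := by
    have : (0:ℝ) ≤ (M/m) ^ (1/(1-r)) := Real.rpow_nonneg (by positivity) _
    rw [hK]; nlinarith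
  -- main induction
  induction t, ht using Nat.le_induction with
  | base =>
    have hne : η (S-1) ≠ 0 := ne_of_gt (hηpos (S-1))
    rw [div_self hne, one_pow, mul_one]
    exact le_max_left _ _
  | succ t ht ih =>
    have hS1 : 1 ≤ S := le_trans (le_max_left _ _) hS
    have ht1 : 1 ≤ t := le_trans hS1 ht
    have htt : (t+1) - 1 = t := by omega
    rw [htt]
    -- case split
    rcases le_or_gt (h t) ((η t * M / m) ^ (1/(1-r))) with hcase | hcase
    · -- small h_t : direct bound by second component
      have hb1 : h (t+1) ≤ h t + M * η t ^ 2 / 2 := by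
        have := hdes' t
        nlinarith [hnn t, hηpos t, hηle1 t]
      have hsplit : (η t * M / m) ^ (1/(1-r)) = η t ^ (1/(1-r)) * (M/m) ^ (1/(1-r)) := by
        rw [mul_div_assoc, Real.mul_rpow (hηpos t).le (by positivity)]
      have he1 : η t ^ (1/(1-r)) ≤ η t ^ α :=
        Real.rpow_le_rpow_of_exponent_ge (hηpos t) (hηle1 t) hα1r
      have he2 : η t ^ (2:ℝ) ≤ η t ^ α :=
        Real.rpow_le_rpow_of_exponent_ge (hηpos t) (hηle1 t) hα2
      have he2' : η t ^ 2 ≤ η t ^ α := by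
        rw [← Real.rpow_two]; exact he2
      have hMm : (0:ℝ) ≤ (M/m) ^ (1/(1-r)) := Real.rpow_nonneg (by positivity) _
      have : h (t+1) ≤ η t ^ α * K := by
        rw [hK, mul_add]
        have c1 : h t ≤ η t ^ α * (M/m) ^ (1/(1-r)) := by
          calc h t ≤ (η t * M / m) ^ (1/(1-r)) := hcase
            _ = η t ^ (1/(1-r)) * (M/m) ^ (1/(1-r)) := hsplit
            _ ≤ η t ^ α * (M/m) ^ (1/(1-r)) := mul_le_mul_of_nonneg_right he1 hMm
        have c2 : M * η t ^ 2 / 2 ≤ η t ^ α * (M/2) := by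
          have := mul_le_mul_of_nonneg_left he2' (show (0:ℝ) ≤ M/2 by positivity)
          linarith
        linarith
      exact le_trans this (le_max_right _ _)
    · -- big h_t : contraction
      have hgaps : m * h t ^ (1-r) ≤ gapF C f (x t) := by
        rcases hrelax t ht with hc | hc
        · exact absurd hc (not_lt.mpr hcase.le)
        · exact hc
      have hbase0 : (0:ℝ) < η t * M / m := div_pos (mul_pos (hηpos t) hM) hm
      have hbpos : (0:ℝ) < (η t * M / m) ^ (1/(1-r)) :=
        Real.rpow_pos_of_pos hbase0 _
      have hpos_ht : 0 < h t := lt_of_lt_of_le hbpos (le_of_lt hcase)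
      have h1rpow : η t * M / m ≤ h t ^ (1-r) := by
        have h2 := Real.rpow_le_rpow hbpos.le hcase.le h1r.le
        rwa [← Real.rpow_mul hbase0.le, one_div_mul_cancel (ne_of_gt h1r),
          Real.rpow_one] at h2
      have hhm : h t ≤ (m/2) ^ (1/r) := (hbase t ht1).trans (hthr t ht)
      have hm2nn : (0:ℝ) ≤ m/2 := by positivity
      have hr2 : h t ^ r ≤ m/2 := by
        have h2 := Real.rpow_le_rpow (hnn t) hhm hrpos.le
        rwa [← Real.rpow_mul hm2nn, one_div_mul_cancel (ne_of_gt hrpos),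
          Real.rpow_one] at h2
      have hrpow_pos : 0 < h t ^ r := Real.rpow_pos_of_pos hpos_ht r
      have key1 : 2 * h t ≤ m * h t ^ (1-r) := by
        have hsub : h t ^ (1-r) = h t / h t ^ r := by
          rw [Real.rpow_sub hpos_ht, Real.rpow_one]
        rw [hsub, mul_div_assoc', le_div_iff₀ hrpow_pos]
        nlinarith
      have hMη : η t * M ≤ m * h t ^ (1-r) := by
        rw [div_le_iff₀ hm] at h1rpow
        linarith
      have key2 : M * η t ^ 2 ≤ η t * (m * h t ^ (1-r)) := by
        nlinarith [mul_le_mul_of_nonneg_left hMη (hηpos t).le]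
      have hcontr : h (t+1) ≤ (1 - η t) * h t := by
        have d := hdes t
        have g1 : η t * (m * h t ^ (1-r)) ≤ η t * gapF C f (x t) :=
          mul_le_mul_of_nonneg_left hgaps (hηpos t).le
        have g2 : η t * (2 * h t) ≤ η t * (m * h t ^ (1-r)) :=
          mul_le_mul_of_nonneg_left key1 (hηpos t).le
        nlinarith
      -- the ratio ρ = η t / η (t-1)
      have hηt1pos : 0 < η (t-1) := hηpos (t-1)
      have hcast : ((t-1:ℕ):ℝ) = (t:ℝ) - 1 := by
        have : (1:ℝ) ≤ (t:ℝ) := by exact_mod_cast ht1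
        push_cast [Nat.cast_sub ht1]; ring
      have hden1 : (0:ℝ) < (t:ℝ) - 1 + ℓ := by
        have : (1:ℝ) ≤ (t:ℝ) := by exact_mod_cast ht1
        linarith
      have hρ_eq : η t / η (t-1) = 1 - 1/((t:ℝ)+ℓ) := by
        rw [hη t, hη (t-1), hcast]
        have h1 : ((t:ℝ) + ℓ) ≠ 0 := ne_of_gt (hden t)
        have h2 : ((t:ℝ) - 1 + ℓ) ≠ 0 := ne_of_gt hden1
        field_simp
        ring
      have hρpos : 0 < η t / η (t-1) := div_pos (hηpos t) hηt1pos
      have hρle1 : η t / η (t-1) ≤ 1 := by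
        rw [hρ_eq]
        have : (0:ℝ) < 1/((t:ℝ)+ℓ) := by positivity
        linarith
      have hber : 1 - η t ≤ (η t / η (t-1))^ℓ := by
        rw [hρ_eq, hη t]
        have hb2 : (-2:ℝ) ≤ -(1/((t:ℝ)+ℓ)) := by
          have h1 : (1:ℝ)/((t:ℝ)+ℓ) ≤ 1 := by
            rw [div_le_one (hden t)]
            have ht0 : (0:ℝ) ≤ (t:ℝ) := Nat.cast_nonneg t
            linarith
          linarith
        have := one_add_mul_le_pow hb2 ℓ
        have heq1 : (1:ℝ) + (ℓ:ℝ) * (-(1/((t:ℝ)+ℓ))) = 1 - (ℓ:ℝ)/((t:ℝ)+ℓ) := by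
          ring
        have heq2 : ((1:ℝ) + -(1/((t:ℝ)+ℓ))) = 1 - 1/((t:ℝ)+ℓ) := by ring
        rw [heq1, heq2] at this
        exact this
      have step1 : h (t+1) ≤ (η t / η (t-1))^ℓ * h t := by
        have := mul_le_mul_of_nonneg_right hber (hnn t)
        linarith
      have ih' : h t ≤ max (h S * (η (t - 1) / η (S - 1)) ^ ℓ) (η (t - 1) ^ α * K) := ih
      have hρℓnn : (0:ℝ) ≤ (η t / η (t-1))^ℓ := pow_nonneg hρpos.le ℓ
      have hAeq : (η t / η (t-1))^ℓ * (h S * (η (t-1)/η (S-1))^ℓ)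
          = h S * (η t/η (S-1))^ℓ := by
        have hmul : (η t/η (t-1)) * (η (t-1)/η (S-1)) = η t / η (S-1) := by
          field_simp
        rw [← hmul, mul_pow]; ring
      have hBle : (η t / η (t-1))^ℓ * (η (t-1)^α * K) ≤ η t ^ α * K := by
        have e1 : (η t/η (t-1))^ℓ = (η t/η (t-1))^((ℓ:ℕ):ℝ) :=
          (Real.rpow_natCast _ ℓ).symm
        have e2 : (η t/η (t-1))^((ℓ:ℕ):ℝ) ≤ (η t/η (t-1))^α :=
          Real.rpow_le_rpow_of_exponent_ge hρpos hρle1 hαℓ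
        have e3 : (η t/η (t-1))^α * η (t-1)^α = η t ^ α := by
          rw [← Real.mul_rpow hρpos.le hηt1pos.le,
            div_mul_cancel₀ _ (ne_of_gt hηt1pos)]
        have e4 : (η t/η (t-1))^ℓ * (η (t-1)^α * K) ≤ (η t/η (t-1))^α * (η (t-1)^α * K) := by
          apply mul_le_mul_of_nonneg_right (e1 ▸ e2)
          exact mul_nonneg (Real.rpow_nonneg hηt1pos.le _) hKnn
        calc (η t/η (t-1))^ℓ * (η (t-1)^α * K)
            ≤ (η t/η (t-1))^α * (η (t-1)^α * K) := e4
          _ = η t ^ α * K := by rw [← mul_assoc, e3]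
      calc h (t+1) ≤ (η t / η (t-1))^ℓ * h t := step1
        _ ≤ (η t / η (t-1))^ℓ * max (h S * (η (t-1)/η (S-1))^ℓ) (η (t-1)^α * K) :=
            mul_le_mul_of_nonneg_left ih' hρℓnn
        _ = max ((η t / η (t-1))^ℓ * (h S * (η (t-1)/η (S-1))^ℓ))
              ((η t / η (t-1))^ℓ * (η (t-1)^α * K)) := mul_max_of_nonneg _ _ hρℓnn
        _ ≤ max (h S * (η t/η (S-1))^ℓ) (η t ^ α * K) := max_le_max hAeq.le hBle
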